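/- With G ≺ H, 𝒜, ℬ as in the combinatorial set-up, an ultrafilter q ∈ S(ℬ) is a weak coheir over 𝒜 if and only if r(q*s) = r(q)*r(s) for every s ∈ S(ℬ). -/
import Mathlib


open Set

/-- Left translate of a set: $hA = \{h·a : a ∈ A\}$. -/
def trL {H : Type*} [Group H] (h : H) (A : Set H) : Set H := (fun x => h * x) '' A

/-- A Boolean algebra of subsets of $T ⊆ H$ closed under left translation by elements
of $T$ (complements are taken relative to $T$). -/
def IsAlgOn {H : Type*} [Group H] (T : Set H) (𝒜 : Set (Set H)) : Prop :=
  (∀ A ∈ 𝒜, A ⊆ T) ∧ ∅ ∈ 𝒜 ∧ T ∈ 𝒜 ∧ (∀ A ∈ 𝒜, T \ A ∈ 𝒜) ∧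
    (∀ A ∈ 𝒜, ∀ B ∈ 𝒜, A ∪ B ∈ 𝒜) ∧ ∀ g ∈ T, ∀ A ∈ 𝒜, trL g A ∈ 𝒜

/-- An ultrafilter on the algebra 𝒜 of subsets of $T$. -/
def IsUltraOn {H : Type*} [Group H] (T : Set H) (𝒜 p : Set (Set H)) : Prop :=
  p ⊆ 𝒜 ∧ ∅ ∉ p ∧ T ∈ p ∧ (∀ A ∈ p, ∀ B ∈ p, A ∩ B ∈ p) ∧
    (∀ A ∈ p, ∀ B ∈ 𝒜, A ⊆ B → B ∈ p) ∧ ∀ A ∈ 𝒜, A ∈ p ∨ T \ A ∈ p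

/-- The map $d_p(A) = \{g ∈ T : g⁻¹A ∈ p\}$. -/
def dmap {H : Type*} [Group H] (T : Set H) (p : Set (Set H)) (A : Set H) : Set H :=
  {g : H | g ∈ T ∧ trL g⁻¹ A ∈ p}

/-- 𝒜 is d-closed. -/
def DClosedOn {H : Type*} [Group H] (T : Set H) (𝒜 : Set (Set H)) : Prop :=
  ∀ p : Set (Set H), IsUltraOn T 𝒜 p → ∀ A ∈ 𝒜, dmap T p A ∈ 𝒜

/-- The semigroup operation on ultrafilters: $A ∈ p*q$ iff $A ∈ 𝒜$ and $d_q(A) ∈ p$. -/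
def ustar {H : Type*} [Group H] (T : Set H) (𝒜 p q : Set (Set H)) : Set (Set H) :=
  {A | A ∈ 𝒜 ∧ dmap T q A ∈ p}

/-- The combinatorial set-up: $G ≺ H$ groups, 𝒜 a d-closed $G$-algebra of subsets of
$G$, ℬ a d-closed $H$-algebra of subsets of $H$, and a Boolean monomorphism
$A ↦ A^\#$ from 𝒜 to ℬ respecting left translation by elements of $G$, with
$A^\# ∩ G = A$ and $ℬ|_G = 𝒜$.  The field `elem` records the combinatorial content
of the elementarity $G ≺ H$: a set of 𝒜 whose $\#$-extension is nonempty is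
itself nonempty. -/
structure CombSetup (H : Type*) [Group H] where
  G : Subgroup H
  𝒜 : Set (Set H)
  ℬ : Set (Set H)
  sharp : Set H → Set H
  alg𝒜 : IsAlgOn (G : Set H) 𝒜
  algℬ : IsAlgOn (univ : Set H) ℬ
  dclosed𝒜 : DClosedOn (G : Set H) 𝒜
  dclosedℬ : DClosedOn (univ : Set H) ℬ
  sharp_mem : ∀ A ∈ 𝒜, sharp A ∈ ℬ
  sharp_inter : ∀ A ∈ 𝒜, sharp A ∩ (G : Set H) = A
  sharp_empty : sharp ∅ = ∅
  sharp_union : ∀ A ∈ 𝒜, ∀ B ∈ 𝒜, sharp (A ∪ B) = sharp A ∪ sharp B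
  sharp_compl : ∀ A ∈ 𝒜, sharp ((G : Set H) \ A) = (sharp A)ᶜ
  sharp_trans : ∀ g ∈ G, ∀ A ∈ 𝒜, sharp (trL g A) = trL g (sharp A)
  restrict_mem : ∀ B ∈ ℬ, B ∩ (G : Set H) ∈ 𝒜
  elem : ∀ A ∈ 𝒜, (sharp A).Nonempty → A.Nonempty

variable {H : Type*} [Group H]

/-- The restriction map $r : S(ℬ) → S(𝒜)$, $r(q) = \{A ∈ 𝒜 : A^\# ∈ q\}$. -/
def CombSetup.res (C : CombSetup H) (q : Set (Set H)) : Set (Set H) :=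
  {A | A ∈ C.𝒜 ∧ C.sharp A ∈ q}

/-- $q ∈ S(ℬ)$ is a weak heir of $p ∈ S(𝒜)$: $d_q(A^\#) = (d_p A)^\#$ for all $A ∈ 𝒜$. -/
def CombSetup.IsWeakHeir (C : CombSetup H) (q p : Set (Set H)) : Prop :=
  IsUltraOn (univ : Set H) C.ℬ q ∧ IsUltraOn (C.G : Set H) C.𝒜 p ∧
    ∀ A ∈ C.𝒜, dmap (univ : Set H) q (C.sharp A) = C.sharp (dmap (C.G : Set H) p A)

/-- $q ∈ S(ℬ)$ is a weak coheir of $p ∈ S(𝒜)$: for every $A ∈ 𝒜$ and $s ∈ S(ℬ)$,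
$d_s(A^\#) ∈ q ↔ d_s(A^\#) ∩ G ∈ p$. -/
def CombSetup.IsWeakCoheir (C : CombSetup H) (q p : Set (Set H)) : Prop :=
  IsUltraOn (univ : Set H) C.ℬ q ∧ IsUltraOn (C.G : Set H) C.𝒜 p ∧
    ∀ A ∈ C.𝒜, ∀ s : Set (Set H), IsUltraOn (univ : Set H) C.ℬ s →
      (dmap (univ : Set H) s (C.sharp A) ∈ q ↔
        dmap (univ : Set H) s (C.sharp A) ∩ (C.G : Set H) ∈ p)

/-- The coheir extension $p^ℬ = \{B ∈ ℬ : B ∩ G ∈ p\}$. -/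
def CombSetup.coheirExt (C : CombSetup H) (p : Set (Set H)) : Set (Set H) :=
  {B | B ∈ C.ℬ ∧ B ∩ (C.G : Set H) ∈ p}

/-- $q ∈ S(ℬ)$ is a coheir over 𝒜: every set in $q$ meets $G$. -/
def CombSetup.IsCoheir (C : CombSetup H) (q : Set (Set H)) : Prop :=
  IsUltraOn (univ : Set H) C.ℬ q ∧ ∀ B ∈ q, (B ∩ (C.G : Set H)).Nonempty

lemma CombSetup.sharp_G (C : CombSetup H) : C.sharp (C.G : Set H) = univ := by
  have h := C.sharp_compl ∅ C.alg𝒜.2.1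
  rw [C.sharp_empty, Set.diff_empty, Set.compl_empty] at h
  exact h

lemma CombSetup.sharp_mono (C : CombSetup H) {A B : Set H} (hA : A ∈ C.𝒜) (hB : B ∈ C.𝒜)
    (hAB : A ⊆ B) : C.sharp A ⊆ C.sharp B := by
  have h : C.sharp A ∪ C.sharp B = C.sharp B := by
    rw [← C.sharp_union A hA B hB, union_eq_self_of_subset_left hAB]
  rw [← h]; exact subset_union_left

lemma alg_inter {T : Set H} {𝒜 : Set (Set H)} (h : IsAlgOn T 𝒜) {A B : Set H}
    (hA : A ∈ 𝒜) (hB : B ∈ 𝒜) : A ∩ B ∈ 𝒜 := by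
  have key : A ∩ B = T \ ((T \ A) ∪ (T \ B)) := by
    have hAT := h.1 A hA
    have hBT := h.1 B hB
    ext x
    simp only [mem_inter_iff, mem_diff, mem_union]
    constructor
    · rintro ⟨hxA, hxB⟩; exact ⟨hAT hxA, by tauto⟩
    · rintro ⟨hxT, hx⟩; push_neg at hx; tauto
  rw [key]
  exact h.2.2.2.1 _ (h.2.2.2.2.1 _ (h.2.2.2.1 A hA) _ (h.2.2.2.1 B hB))

lemma CombSetup.sharp_inter' (C : CombSetup H) {A B : Set H} (hA : A ∈ C.𝒜) (hB : B ∈ C.𝒜) :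
    C.sharp (A ∩ B) = C.sharp A ∩ C.sharp B := by
  have hAT := C.alg𝒜.1 A hA
  have hBT := C.alg𝒜.1 B hB
  have hA' : (C.G : Set H) \ A ∈ C.𝒜 := C.alg𝒜.2.2.2.1 A hA
  have hB' : (C.G : Set H) \ B ∈ C.𝒜 := C.alg𝒜.2.2.2.1 B hB
  have hU : ((C.G : Set H) \ A) ∪ ((C.G : Set H) \ B) ∈ C.𝒜 := C.alg𝒜.2.2.2.2.1 _ hA' _ hB'
  have key : A ∩ B = (C.G : Set H) \ (((C.G : Set H) \ A) ∪ ((C.G : Set H) \ B)) := by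
    ext x
    simp only [mem_inter_iff, mem_diff, mem_union]
    constructor
    · rintro ⟨hxA, hxB⟩; exact ⟨hAT hxA, by tauto⟩
    · rintro ⟨hxT, hx⟩; push_neg at hx; tauto
  rw [key, C.sharp_compl _ hU, C.sharp_union _ hA' _ hB', C.sharp_compl _ hA,
    C.sharp_compl _ hB, compl_union, compl_compl, compl_compl]

lemma CombSetup.res_ultra (C : CombSetup H) {s : Set (Set H)}
    (hs : IsUltraOn (univ : Set H) C.ℬ s) : IsUltraOn (C.G : Set H) C.𝒜 (C.res s) := by
  obtain ⟨hsub, hemp, huniv, hinter, hup, hult⟩ := hs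
  refine ⟨fun A hA => hA.1, ?_, ?_, ?_, ?_, ?_⟩
  · rintro ⟨-, h⟩; rw [C.sharp_empty] at h; exact hemp h
  · exact ⟨C.alg𝒜.2.2.1, by rw [C.sharp_G]; exact huniv⟩
  · rintro A ⟨hA, hAs⟩ B ⟨hB, hBs⟩
    exact ⟨alg_inter C.alg𝒜 hA hB, by
      rw [C.sharp_inter' hA hB]; exact hinter _ hAs _ hBs⟩
  · rintro A ⟨hA, hAs⟩ B hB hAB
    exact ⟨hB, hup _ hAs _ (C.sharp_mem B hB) (C.sharp_mono hA hB hAB)⟩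
  · intro A hA
    rcases hult (C.sharp A) (C.sharp_mem A hA) with h | h
    · exact Or.inl ⟨hA, h⟩
    · refine Or.inr ⟨C.alg𝒜.2.2.2.1 A hA, ?_⟩
      rw [C.sharp_compl A hA]
      simpa [Set.compl_eq_univ_diff] using h

lemma CombSetup.dmap_res (C : CombSetup H) {s : Set (Set H)}
    (hs : IsUltraOn (univ : Set H) C.ℬ s) {A : Set H} (hA : A ∈ C.𝒜) :
    dmap (C.G : Set H) (C.res s) A = dmap (univ : Set H) s (C.sharp A) ∩ (C.G : Set H) := by
  ext g
  simp only [dmap, mem_inter_iff, mem_setOf_eq, mem_univ, true_and, CombSetup.res]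
  constructor
  · rintro ⟨hg, -, hsh⟩
    rw [C.sharp_trans g⁻¹ (inv_mem hg) A hA] at hsh
    exact ⟨hsh, hg⟩
  · rintro ⟨hsh, hg⟩
    have hmem : trL g⁻¹ A ∈ C.𝒜 :=
      C.alg𝒜.2.2.2.2.2 g⁻¹ (inv_mem hg) A hA
    refine ⟨hg, hmem, ?_⟩
    rw [C.sharp_trans g⁻¹ (inv_mem hg) A hA]
    exact hsh

/-- $q ∈ S(ℬ)$ is a weak coheir over 𝒜 iff $r(q*s) = r(q)*r(s)$ for every $s ∈ S(ℬ)$. -/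
theorem weakCoheir_iff_res_mul (C : CombSetup H) (q : Set (Set H))
    (hq : IsUltraOn (univ : Set H) C.ℬ q) :
    C.IsWeakCoheir q (C.res q) ↔
      ∀ s : Set (Set H), IsUltraOn (univ : Set H) C.ℬ s →
        C.res (ustar (univ : Set H) C.ℬ q s) =
          ustar (C.G : Set H) C.𝒜 (C.res q) (C.res s) := by
  constructor
  · rintro ⟨-, -, hwc⟩ s hs
    ext A
    constructor
    · rintro ⟨hA, -, hD⟩
      refine ⟨hA, ?_⟩
      show dmap (C.G : Set H) (C.res s) A ∈ C.res q
      rw [C.dmap_res hs hA]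
      exact (hwc A hA s hs).mp hD
    · rintro ⟨hA, hmem⟩
      have hmem' : dmap (C.G : Set H) (C.res s) A ∈ C.res q := hmem
      rw [C.dmap_res hs hA] at hmem'
      exact ⟨hA, C.sharp_mem A hA, (hwc A hA s hs).mpr hmem'⟩
  · intro h
    refine ⟨hq, C.res_ultra hq, ?_⟩
    intro A hA s hs
    have heq := h s hs
    constructor
    · intro hD
      have hmem : A ∈ ustar (C.G : Set H) C.𝒜 (C.res q) (C.res s) := by
        rw [← heq]
        exact ⟨hA, C.sharp_mem A hA, hD⟩
      have := hmem.2
      rwa [C.dmap_res hs hA] at this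
    · intro hDG
      have hmem : A ∈ C.res (ustar (univ : Set H) C.ℬ q s) := by
        rw [heq]
        refine ⟨hA, ?_⟩
        rw [C.dmap_res hs hA]
        exact hDG
      exact hmem.2.2
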